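/- Let f : ℝⁿ → ℝ and g_i : ℝⁿ → ℝ, i = 1,…,m, be continuously differentiable. Let (x^k) ⊆ ℝⁿ converge to x̄, let τ_k → ∞, and suppose ‖∇f(x^k) + τ_k·Σ_{i=1}^m max(0, g_i(x^k))·∇g_i(x^k)‖ → 0. If the E-LICQ holds at x̄ (the gradients ∇g_i(x̄) for i with g_i(x̄) ≥ 0 are linearly independent), then x̄ is a KKT point of the problem min f(x) s.t. g_i(x) ≤ 0, i = 1,…,m: there exist multipliers λ ∈ ℝᵐ with λ_i ≥ 0 for all i, ∇f(x̄) + Σ_{i=1}^m λ_i·∇g_i(x̄) = 0, g_i(x̄) ≤ 0 for all i, and λ_i·g_i(x̄) = 0 for all i. -/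

import Mathlib

open Filter
set_option maxHeartbeats 1000000

lemma grad_cont {n : ℕ} {f : EuclideanSpace ℝ (Fin n) → ℝ} (hf : ContDiff ℝ 1 f) :
    Continuous (gradient f) := by
  have h1 : Continuous (fderiv ℝ f) := hf.continuous_fderiv one_ne_zero
  exact (InnerProductSpace.toDual ℝ _).symm.continuous.comp h1

lemma coeff_tendsto {n : ℕ} {ι : Type*} [Fintype ι]
    {v : ι → EuclideanSpace ℝ (Fin n)} (hv : LinearIndependent ℝ v)
    {Gk : ι → ℕ → EuclideanSpace ℝ (Fin n)}
    (hGk : ∀ i, Tendsto (Gk i) atTop (nhds (v i)))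
    {c : ℕ → ι → ℝ} {w : EuclideanSpace ℝ (Fin n)}
    (hu : Tendsto (fun k => ∑ i, c k i • Gk i k) atTop (nhds w)) :
    ∃ Λ : ι → ℝ, Tendsto c atTop (nhds Λ) ∧ ∑ i, Λ i • v i = w := by
  classical
  set T : (ι → ℝ) →ₗ[ℝ] EuclideanSpace ℝ (Fin n) :=
    { toFun := fun a => ∑ i, a i • v i
      map_add' := by intro a b; simp [add_smul, Finset.sum_add_distrib]
      map_smul' := by intro r a; simp [smul_smul, Finset.smul_sum] } with hT
  have hker : LinearMap.ker T = ⊥ := by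
    rw [LinearMap.ker_eq_bot']
    intro a ha
    exact funext (Fintype.linearIndependent_iff.mp hv a ha)
  obtain ⟨P0, hP0⟩ := T.exists_leftInverse_of_injective hker
  set P : EuclideanSpace ℝ (Fin n) →L[ℝ] (ι → ℝ) := LinearMap.toContinuousLinearMap P0 with hP
  have hPT : ∀ a : ι → ℝ, P (T a) = a := fun a => LinearMap.ext_iff.mp hP0 a
  set u : ℕ → EuclideanSpace ℝ (Fin n) := fun k => ∑ i, c k i • Gk i k with hu'
  set ε : ℕ → ℝ := fun k => ∑ i, ‖v i - Gk i k‖ with hε'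
  have hε : Tendsto ε atTop (nhds 0) := by
    have : Tendsto ε atTop (nhds (∑ i : ι, (0:ℝ))) := by
      apply tendsto_finset_sum
      intro i _
      have : Tendsto (fun k => ‖v i - Gk i k‖) atTop (nhds ‖v i - v i‖) :=
        (tendsto_const_nhds.sub (hGk i)).norm
      simpa using this
    simpa using this
  -- key identity
  have key : ∀ k, c k = P (u k) + P (∑ i, c k i • (v i - Gk i k)) := by
    intro k
    have h1 : u k + (∑ i, c k i • (v i - Gk i k)) = T (c k) := by
      rw [hu', ← Finset.sum_add_distrib]
      simp only [smul_sub]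
      simp [hT]
    rw [← map_add, h1, hPT]
  -- bound on the error term
  have hbound : ∀ k, ‖P (∑ i, c k i • (v i - Gk i k))‖ ≤ ‖P‖ * (‖c k‖ * ε k) := by
    intro k
    calc ‖P (∑ i, c k i • (v i - Gk i k))‖ ≤ ‖P‖ * ‖∑ i, c k i • (v i - Gk i k)‖ :=
          P.le_opNorm _
      _ ≤ ‖P‖ * (‖c k‖ * ε k) := by
          apply mul_le_mul_of_nonneg_left _ (norm_nonneg P)
          calc ‖∑ i, c k i • (v i - Gk i k)‖ ≤ ∑ i, ‖c k i • (v i - Gk i k)‖ :=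
                norm_sum_le _ _
            _ ≤ ∑ i, ‖c k‖ * ‖v i - Gk i k‖ := by
                apply Finset.sum_le_sum
                intro i _
                rw [norm_smul]
                exact mul_le_mul_of_nonneg_right (norm_le_pi_norm (c k) i) (norm_nonneg _)
            _ = ‖c k‖ * ε k := by rw [hε', Finset.mul_sum]
  have hPu : Tendsto (fun k => P (u k)) atTop (nhds (P w)) :=
    (P.continuous.tendsto w).comp hu
  -- boundedness of c
  have hcb : ∀ᶠ k in atTop, ‖c k‖ ≤ 2 * (‖P w‖ + 1) := by
    have h1 : ∀ᶠ k in atTop, ‖P (u k)‖ ≤ ‖P w‖ + 1 :=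
      (hPu.norm.eventually_lt_const (lt_add_one _)).mono fun k hk => hk.le
    have h2 : ∀ᶠ k in atTop, ‖P‖ * ε k ≤ 1/2 := by
      have : Tendsto (fun k => ‖P‖ * ε k) atTop (nhds (‖P‖ * 0)) := hε.const_mul _
      rw [mul_zero] at this
      exact (this.eventually_lt_const (by norm_num)).mono fun k hk => hk.le
    filter_upwards [h1, h2] with k hk1 hk2
    have h3 : ‖c k‖ ≤ ‖P (u k)‖ + ‖P‖ * (‖c k‖ * ε k) := by
      calc ‖c k‖ = ‖P (u k) + P (∑ i, c k i • (v i - Gk i k))‖ := by rw [← key k]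
        _ ≤ ‖P (u k)‖ + ‖P (∑ i, c k i • (v i - Gk i k))‖ := norm_add_le _ _
        _ ≤ _ := by linarith [hbound k]
    have h4 : ‖P‖ * (‖c k‖ * ε k) ≤ (1/2) * ‖c k‖ := by
      calc ‖P‖ * (‖c k‖ * ε k) = (‖P‖ * ε k) * ‖c k‖ := by ring
        _ ≤ (1/2) * ‖c k‖ := mul_le_mul_of_nonneg_right hk2 (norm_nonneg _)
    linarith
  -- c k - P (u k) → 0
  have hdiff : Tendsto (fun k => c k - P (u k)) atTop (nhds 0) := by
    rw [tendsto_zero_iff_norm_tendsto_zero]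
    apply squeeze_zero' (Eventually.of_forall fun k => norm_nonneg _)
      (g := fun k => ‖P‖ * ((2 * (‖P w‖ + 1)) * ε k))
    · filter_upwards [hcb] with k hk
      have : c k - P (u k) = P (∑ i, c k i • (v i - Gk i k)) :=
        sub_eq_iff_eq_add'.mpr (key k)
      rw [this]
      calc ‖P (∑ i, c k i • (v i - Gk i k))‖ ≤ ‖P‖ * (‖c k‖ * ε k) := hbound k
        _ ≤ ‖P‖ * ((2 * (‖P w‖ + 1)) * ε k) := by
            apply mul_le_mul_of_nonneg_left _ (norm_nonneg P)
            apply mul_le_mul_of_nonneg_right hk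
            rw [hε']
            exact Finset.sum_nonneg fun i _ => norm_nonneg _
    · have : Tendsto (fun k => ‖P‖ * ((2 * (‖P w‖ + 1)) * ε k)) atTop
          (nhds (‖P‖ * ((2 * (‖P w‖ + 1)) * 0))) := (hε.const_mul _).const_mul _
      simpa using this
  have hc : Tendsto c atTop (nhds (P w)) := by
    have := hdiff.add hPu
    simpa using this
  refine ⟨P w, hc, ?_⟩
  have h5 : Tendsto u atTop (nhds (∑ i, P w i • v i)) := by
    apply tendsto_finset_sum
    intro i _
    exact (((continuous_apply i).tendsto (P w)).comp hc).smul (hGk i)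
  exact tendsto_nhds_unique h5 hu

theorem stmt12 {n m : ℕ} (f : EuclideanSpace ℝ (Fin n) → ℝ)
    (g : Fin m → EuclideanSpace ℝ (Fin n) → ℝ)
    (hf : ContDiff ℝ 1 f) (hg : ∀ i, ContDiff ℝ 1 (g i))
    (x : ℕ → EuclideanSpace ℝ (Fin n)) (xbar : EuclideanSpace ℝ (Fin n))
    (hx : Tendsto x atTop (nhds xbar))
    (τ : ℕ → ℝ) (hτpos : ∀ k, 0 < τ k) (hτ : Tendsto τ atTop atTop)
    (hgrad : Tendsto
      (fun k => ‖gradient f (x k) + τ k • ∑ i, max 0 (g i (x k)) • gradient (g i) (x k)‖)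
      atTop (nhds 0))
    (hELICQ : LinearIndependent ℝ
      (fun i : {i : Fin m // 0 ≤ g i xbar} => gradient (g i.1) xbar)) :
    ∃ lam : Fin m → ℝ,
      (∀ i, 0 ≤ lam i) ∧
      gradient f xbar + ∑ i, lam i • gradient (g i) xbar = 0 ∧
      (∀ i, g i xbar ≤ 0) ∧
      (∀ i, lam i * g i xbar = 0) := by
  classical
  -- sequence of full penalty terms tends to zero
  have hs : Tendsto
      (fun k => gradient f (x k) + τ k • ∑ i, max 0 (g i (x k)) • gradient (g i) (x k))
      atTop (nhds 0) := tendsto_zero_iff_norm_tendsto_zero.mpr hgrad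
  have hgradf : Tendsto (fun k => gradient f (x k)) atTop (nhds (gradient f xbar)) :=
    ((grad_cont hf).tendsto xbar).comp hx
  have hgi : ∀ i, Tendsto (fun k => g i (x k)) atTop (nhds (g i xbar)) :=
    fun i => ((hg i).continuous.tendsto xbar).comp hx
  -- vanishing of inactive terms
  have hvan : ∀ᶠ k in atTop, ∀ i : Fin m, ¬ 0 ≤ g i xbar → max 0 (g i (x k)) = 0 := by
    rw [eventually_all]
    intro i
    by_cases hi : 0 ≤ g i xbar
    · filter_upwards with k hk; exact absurd hi hk
    · push_neg at hi
      filter_upwards [(hgi i).eventually_lt_const hi] with k hk _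
      exact max_eq_left hk.le
  -- coefficient sequences
  set c : ℕ → {i : Fin m // 0 ≤ g i xbar} → ℝ :=
    fun k i => τ k * max 0 (g i.1 (x k)) with hc'
  -- eventual identity of the restricted sum
  have hueq : ∀ᶠ k in atTop,
      (∑ i : {i : Fin m // 0 ≤ g i xbar}, c k i • gradient (g i.1) (x k)) =
      (gradient f (x k) + τ k • ∑ i, max 0 (g i (x k)) • gradient (g i) (x k))
        - gradient f (x k) := by
    filter_upwards [hvan] with k hk
    rw [add_sub_cancel_left, Finset.smul_sum]
    simp_rw [smul_smul]
    rw [← Finset.sum_subtype (Finset.univ.filter fun i => 0 ≤ g i xbar)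
      (by simp) (fun i => (τ k * max 0 (g i (x k))) • gradient (g i) (x k))]
    apply Finset.sum_subset (Finset.subset_univ _)
    intro i _ hi
    simp only [Finset.mem_filter, Finset.mem_univ, true_and] at hi
    rw [hk i hi, mul_zero, zero_smul]
  have hu : Tendsto
      (fun k => ∑ i : {i : Fin m // 0 ≤ g i xbar}, c k i • gradient (g i.1) (x k))
      atTop (nhds (-gradient f xbar)) := by
    have h1 : Tendsto
        (fun k => (gradient f (x k) + τ k • ∑ i, max 0 (g i (x k)) • gradient (g i) (x k))
          - gradient f (x k)) atTop (nhds (0 - gradient f xbar)) := hs.sub hgradf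
    rw [zero_sub] at h1
    exact h1.congr' (EventuallyEq.symm hueq)
  have hGk : ∀ i : {i : Fin m // 0 ≤ g i xbar},
      Tendsto (fun k => gradient (g i.1) (x k)) atTop (nhds (gradient (g i.1) xbar)) :=
    fun i => ((grad_cont (hg i.1)).tendsto xbar).comp hx
  obtain ⟨Λ, hΛ, hw⟩ := coeff_tendsto hELICQ hGk hu
  have hci : ∀ i : {i : Fin m // 0 ≤ g i xbar},
      Tendsto (fun k => c k i) atTop (nhds (Λ i)) :=
    fun i => ((continuous_apply i).tendsto Λ).comp hΛ
  -- Λ is nonnegative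
  have hΛpos : ∀ i, 0 ≤ Λ i := fun i =>
    ge_of_tendsto' (hci i) fun k => mul_nonneg (hτpos k).le (le_max_left 0 _)
  -- constraints satisfied
  have hgle : ∀ i, g i xbar ≤ 0 := by
    intro i
    by_contra h
    push_neg at h
    have hib : (0:ℝ) ≤ g i xbar := h.le
    have hlow : ∀ᶠ k in atTop, τ k * (g i xbar / 2) ≤ c k ⟨i, hib⟩ := by
      filter_upwards [(hgi i).eventually_const_lt (half_lt_self h)] with k hk
      have : g i xbar / 2 ≤ max 0 (g i (x k)) := le_trans hk.le (le_max_right _ _)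
      exact mul_le_mul_of_nonneg_left this (hτpos k).le
    have hdiv : Tendsto (fun k => τ k * (g i xbar / 2)) atTop atTop :=
      hτ.atTop_mul_const (half_pos h)
    have : Tendsto (fun k => c k ⟨i, hib⟩) atTop atTop :=
      tendsto_atTop_mono' atTop hlow hdiv
    exact not_tendsto_atTop_of_tendsto_nhds (hci ⟨i, hib⟩) this
  -- define the multipliers
  refine ⟨fun i => if h : 0 ≤ g i xbar then Λ ⟨i, h⟩ else 0, ?_, ?_, hgle, ?_⟩
  · intro i
    by_cases h : 0 ≤ g i xbar
    · simp only [dif_pos h]; exact hΛpos _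
    · simp only [dif_neg h]; exact le_refl 0
  · have e1 : (∑ i : {i : Fin m // 0 ≤ g i xbar},
        (if h : 0 ≤ g i.1 xbar then Λ ⟨i.1, h⟩ else 0) • gradient (g i.1) xbar)
        = ∑ i : {i : Fin m // 0 ≤ g i xbar}, Λ i • gradient (g i.1) xbar :=
      Finset.sum_congr rfl fun i _ => by rw [dif_pos i.2]
    have hsum : (∑ i : Fin m, (if h : 0 ≤ g i xbar then Λ ⟨i, h⟩ else 0) • gradient (g i) xbar)
        = ∑ i : {i : Fin m // 0 ≤ g i xbar}, Λ i • gradient (g i.1) xbar := by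
      rw [← e1, ← Finset.sum_subtype (Finset.univ.filter fun i => 0 ≤ g i xbar)
        (by simp) (fun i => (if h : 0 ≤ g i xbar then Λ ⟨i, h⟩ else 0) • gradient (g i) xbar)]
      refine (Finset.sum_subset (Finset.subset_univ _) fun i _ hi => ?_).symm
      simp only [Finset.mem_filter, Finset.mem_univ, true_and] at hi
      rw [dif_neg hi, zero_smul]
    rw [hsum]
    have : ∑ i : {i : Fin m // 0 ≤ g i xbar}, Λ i • gradient (g i.1) xbar = -gradient f xbar := hw
    rw [this, add_neg_cancel]
  · intro i
    by_cases h : 0 ≤ g i xbar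
    · have : g i xbar = 0 := le_antisymm (hgle i) h
      rw [this, mul_zero]
    · simp only [dif_neg h, zero_mul]
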